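/- Let t ≥ 2 and let H be the hypergraph whose pairwise distinct vertices are v1,…,vt together with w_{i,1}, w_{i,2} for 1 ≤ i ≤ t−1, and whose hyperedges are {v1, w_{1,1}, w_{1,2}}, {v_t, w_{t−1,1}, w_{t−1,2}}, and {v_i, w_{i−1,1}, w_{i−1,2}, w_{i,1}, w_{i,2}} for 2 ≤ i ≤ t−1. In every segment representation (α, β) of H, all the points α(v_i) (1 ≤ i ≤ t) and α(w_{i,j}) (1 ≤ i ≤ t−1, j ∈ {1,2}) are collinear, and for every 2 ≤ i ≤ t−1 the point α(v_i) lies in the open segment between α(v_{i−1}) and α(v_{i+1}). -/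

import Mathlib

set_option maxRecDepth 8000

abbrev Pt : Type := ℝ × ℝ

def IsLine (L : Set Pt) : Prop :=
  ∃ a b : Pt, a ≠ b ∧ L = (affineSpan ℝ {a, b} : Set Pt)

def IsSegment (S : Set Pt) : Prop :=
  ∃ a b : Pt, a ≠ b ∧ S = segment ℝ a b

structure FinsetHypergraph (ι : Type) where
  V : Finset ι
  E : Finset (Finset ι)
  edge_nonempty : ∀ e ∈ E, e.Nonempty
  edge_subset : ∀ e ∈ E, e ⊆ V

structure LineRep {ι : Type} (H : FinsetHypergraph ι) where
  α : ι → Pt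
  β : Finset ι → Set Pt
  α_inj : Set.InjOn α ↑H.V
  β_inj : Set.InjOn β ↑H.E
  β_isLine : ∀ e ∈ H.E, IsLine (β e)
  incidence : ∀ v ∈ H.V, ∀ e ∈ H.E, (v ∈ e ↔ α v ∈ β e)

structure SegmentRep {ι : Type} (H : FinsetHypergraph ι) where
  α : ι → Pt
  β : Finset ι → Set Pt
  α_inj : Set.InjOn α ↑H.V
  β_inj : Set.InjOn β ↑H.E
  β_isSegment : ∀ e ∈ H.E, IsSegment (β e)
  incidence : ∀ v ∈ H.V, ∀ e ∈ H.E, (v ∈ e ↔ α v ∈ β e)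

def SegmentRep.Strict {ι : Type} {H : FinsetHypergraph ι} (R : SegmentRep H) : Prop :=
  ∀ e ∈ H.E, ∀ e' ∈ H.E, e ≠ e' → (R.β e ∩ R.β e').Subsingleton

def LineRep.CrossingFree {ι : Type} {H : FinsetHypergraph ι} (R : LineRep H) : Prop :=
  ∀ e ∈ H.E, ∀ e' ∈ H.E, ((R.β e ∩ R.β e').Nonempty ↔ ∃ v, v ∈ e ∧ v ∈ e')

def SegmentRep.CrossingFree {ι : Type} {H : FinsetHypergraph ι} (R : SegmentRep H) : Prop :=
  ∀ e ∈ H.E, ∀ e' ∈ H.E, ((R.β e ∩ R.β e').Nonempty ↔ ∃ v, v ∈ e ∧ v ∈ e')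


section Stmt12Aux

private lemma stmt12_keyhalf (ra rb rc rq rp : ℝ) (hac : ra < rc) (hab : ra ≠ rb) (hbc : rb ≠ rc)
    (A : rb ∉ Set.uIcc rq ra) (C : ra ∉ Set.uIcc rq rb) (E : rc ∉ Set.uIcc rq rb)
    (F : rc ∉ Set.uIcc rp rb) (G : rb ∉ Set.uIcc rp rc) (D : ra ∉ Set.uIcc rp rb)
    (H : rq ∉ Set.uIcc rp rc) (B : rp ∉ Set.uIcc rq ra) : ra < rb ∧ rb < rc := by
  rcases lt_or_ge ra rb with h1 | h1
  · rcases lt_or_ge rb rc with h2 | h2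
    · exact ⟨h1, h2⟩
    · have hcb : rc < rb := lt_of_le_of_ne h2 (fun h => hbc h.symm)
      exfalso
      have hq2 : rq ≤ rb := by
        by_contra h; push_neg at h
        exact A (Set.mem_uIcc.2 (Or.inr ⟨h1.le, h.le⟩))
      have hqc : rc < rq := by
        by_contra h; push_neg at h
        exact E (Set.mem_uIcc.2 (Or.inl ⟨h, hcb.le⟩))
      have hp2 : rp ≤ rb := by
        by_contra h; push_neg at h
        exact G (Set.mem_uIcc.2 (Or.inr ⟨hcb.le, h.le⟩))
      have hpc : rc ≤ rp := by
        by_contra h; push_neg at h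
        exact F (Set.mem_uIcc.2 (Or.inl ⟨h.le, hcb.le⟩))
      have hpq : rp < rq := by
        by_contra h; push_neg at h
        exact H (Set.mem_uIcc.2 (Or.inr ⟨hqc.le, h⟩))
      exact B (Set.mem_uIcc.2 (Or.inr ⟨by linarith, hpq.le⟩))
  · have hba : rb < ra := lt_of_le_of_ne h1 (fun h => hab h.symm)
    exfalso
    have hq1 : rb < rq := by
      by_contra h; push_neg at h
      exact A (Set.mem_uIcc.2 (Or.inl ⟨h, hba.le⟩))
    have hq2 : rq ≤ ra := by
      by_contra h; push_neg at h
      exact C (Set.mem_uIcc.2 (Or.inr ⟨hba.le, h.le⟩))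
    have hp1 : rb ≤ rp := by
      by_contra h; push_neg at h
      exact G (Set.mem_uIcc.2 (Or.inl ⟨h.le, by linarith⟩))
    have hp2 : rp < ra := by
      by_contra h; push_neg at h
      exact D (Set.mem_uIcc.2 (Or.inr ⟨hba.le, h⟩))
    have hpq : rp < rq := by
      by_contra h; push_neg at h
      exact B (Set.mem_uIcc.2 (Or.inl ⟨h, hp2.le⟩))
    exact H (Set.mem_uIcc.2 (Or.inl ⟨hpq.le, by linarith⟩))

private lemma stmt12_keylem (ra rb rc rq rp : ℝ) (hab : ra ≠ rb) (hbc : rb ≠ rc) (hac : ra ≠ rc)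
    (A : rb ∉ Set.uIcc rq ra) (C : ra ∉ Set.uIcc rq rb) (E : rc ∉ Set.uIcc rq rb)
    (F : rc ∉ Set.uIcc rp rb) (G : rb ∉ Set.uIcc rp rc) (D : ra ∉ Set.uIcc rp rb)
    (H : rq ∉ Set.uIcc rp rc) (B : rp ∉ Set.uIcc rq ra) : Sbtw ℝ ra rb rc := by
  rcases hac.lt_or_gt with h | h
  · obtain ⟨u1, u2⟩ := stmt12_keyhalf ra rb rc rq rp h hab hbc A C E F G D H B
    exact ⟨mem_segment_iff_wbtw.1
      (by rw [segment_eq_uIcc]; exact Set.mem_uIcc.2 (Or.inl ⟨u1.le, u2.le⟩)),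
      ne_of_gt u1, ne_of_lt u2⟩
  · obtain ⟨u1, u2⟩ := stmt12_keyhalf rc rb ra rp rq h (Ne.symm hbc) (Ne.symm hab) G F D C A E B H
    exact ⟨mem_segment_iff_wbtw.1
      (by rw [segment_eq_uIcc]; exact Set.mem_uIcc.2 (Or.inr ⟨u1.le, u2.le⟩)),
      ne_of_lt u2, ne_of_gt u1⟩

private lemma stmt12_collinear_span (x y : Pt) :
    Collinear ℝ ((affineSpan ℝ {x, y} : AffineSubspace ℝ Pt) : Set Pt) := by
  rw [collinear_iff_of_mem (left_mem_affineSpan_pair ℝ x y)]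
  refine ⟨y -ᵥ x, fun p hp => ?_⟩
  have h2 := AffineSubspace.vsub_mem_direction hp (left_mem_affineSpan_pair ℝ x y)
  rw [direction_affineSpan, vectorSpan_pair] at h2
  rcases Submodule.mem_span_singleton.1 h2 with ⟨r, hr⟩
  exact ⟨-r, by rw [eq_vadd_iff_vsub_eq, neg_smul, ← smul_neg, neg_vsub_eq_vsub_rev, hr]⟩

private lemma stmt12_collinear_segment (a b : Pt) : Collinear ℝ (segment ℝ a b) := by
  refine Collinear.subset ?_ (stmt12_collinear_span a b)
  rw [segment_eq_image_lineMap]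
  rintro p ⟨r, -, rfl⟩
  exact AffineMap.lineMap_mem_affineSpan_pair r a b

def stmt12Edg {ι : Type} [DecidableEq ι] (t : ℕ) (v : ℕ → ι) (w : ℕ → Fin 2 → ι) (i : ℕ) :
    Finset ι :=
  if i = 1 then {v 1, w 1 0, w 1 1}
  else if i = t then {v t, w (t - 1) 0, w (t - 1) 1}
  else {v i, w (i - 1) 0, w (i - 1) 1, w i 0, w i 1}

end Stmt12Aux

theorem stmt12 {ι : Type} [DecidableEq ι] (t : ℕ) (ht : 2 ≤ t)
    (v : ℕ → ι) (w : ℕ → Fin 2 → ι)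
    (hv : ∀ i ∈ Finset.Icc 1 t, ∀ j ∈ Finset.Icc 1 t, v i = v j → i = j)
    (hw : ∀ i ∈ Finset.Icc 1 (t - 1), ∀ i' ∈ Finset.Icc 1 (t - 1), ∀ j j' : Fin 2,
      w i j = w i' j' → i = i' ∧ j = j')
    (hvw : ∀ i ∈ Finset.Icc 1 t, ∀ i' ∈ Finset.Icc 1 (t - 1), ∀ j : Fin 2, v i ≠ w i' j)
    (H : FinsetHypergraph ι)
    (hV : H.V = (Finset.Icc 1 t).image v ∪
      (Finset.Icc 1 (t - 1)).image (fun i => w i 0) ∪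
      (Finset.Icc 1 (t - 1)).image (fun i => w i 1))
    (hE : H.E = insert ({v 1, w 1 0, w 1 1} : Finset ι)
      (insert ({v t, w (t - 1) 0, w (t - 1) 1} : Finset ι)
        ((Finset.Icc 2 (t - 1)).image
          (fun i => ({v i, w (i - 1) 0, w (i - 1) 1, w i 0, w i 1} : Finset ι)))))
    (R : SegmentRep H) :
    Collinear ℝ ({p : Pt | ∃ i, 1 ≤ i ∧ i ≤ t ∧ p = R.α (v i)} ∪
      {p : Pt | ∃ i, 1 ≤ i ∧ i ≤ t - 1 ∧ ∃ j : Fin 2, p = R.α (w i j)}) ∧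
    ∀ i, 2 ≤ i → i ≤ t - 1 →
      R.α (v i) ∈ openSegment ℝ (R.α (v (i - 1))) (R.α (v (i + 1))) := by
  classical
  have ht1 : 1 ≤ t - 1 := by omega
  have hIv : ∀ {n : ℕ}, 1 ≤ n → n ≤ t → n ∈ Finset.Icc 1 t :=
    fun h1 h2 => Finset.mem_Icc.2 ⟨h1, h2⟩
  have hIw : ∀ {n : ℕ}, 1 ≤ n → n ≤ t - 1 → n ∈ Finset.Icc 1 (t - 1) :=
    fun h1 h2 => Finset.mem_Icc.2 ⟨h1, h2⟩
  have edg1 : stmt12Edg t v w 1 = {v 1, w 1 0, w 1 1} := by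
    unfold stmt12Edg; rw [if_pos rfl]
  have edgt : stmt12Edg t v w t = {v t, w (t - 1) 0, w (t - 1) 1} := by
    unfold stmt12Edg; rw [if_neg (by omega : ¬ t = 1), if_pos rfl]
  have edgm : ∀ i, i ≠ 1 → i ≠ t →
      stmt12Edg t v w i = {v i, w (i - 1) 0, w (i - 1) 1, w i 0, w i 1} := by
    intro i h1 h2; unfold stmt12Edg; rw [if_neg h1, if_neg h2]
  have hvV : ∀ k, 1 ≤ k → k ≤ t → v k ∈ H.V := by
    intro k h1 h2
    rw [hV]
    simp only [Finset.mem_union, Finset.mem_image]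
    exact Or.inl (Or.inl ⟨k, hIv h1 h2, rfl⟩)
  have hwV : ∀ k, 1 ≤ k → k ≤ t - 1 → ∀ j : Fin 2, w k j ∈ H.V := by
    intro k h1 h2 j
    rw [hV]
    simp only [Finset.mem_union, Finset.mem_image]
    fin_cases j
    · exact Or.inl (Or.inr ⟨k, hIw h1 h2, rfl⟩)
    · exact Or.inr ⟨k, hIw h1 h2, rfl⟩
  have hedgE : ∀ i, 1 ≤ i → i ≤ t → stmt12Edg t v w i ∈ H.E := by
    intro i h1 h2
    rw [hE]
    by_cases e1 : i = 1
    · subst e1; rw [edg1]; exact Finset.mem_insert_self _ _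
    · by_cases et : i = t
      · subst et; rw [edgt]; exact Finset.mem_insert_of_mem (Finset.mem_insert_self _ _)
      · rw [edgm i e1 et]
        refine Finset.mem_insert_of_mem (Finset.mem_insert_of_mem ?_)
        exact Finset.mem_image.2 ⟨i, Finset.mem_Icc.2 ⟨by omega, by omega⟩, rfl⟩
  have hv_mem : ∀ k, 1 ≤ k → k ≤ t → ∀ i, 1 ≤ i → i ≤ t →
      (v k ∈ stmt12Edg t v w i ↔ k = i) := by
    intro k hk1 hk2 i hi1 hi2
    constructor
    · intro hm
      by_cases e1 : i = 1
      · subst e1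
        rw [edg1] at hm
        simp only [Finset.mem_insert, Finset.mem_singleton] at hm
        rcases hm with h | h | h
        · exact hv k (hIv hk1 hk2) 1 (hIv le_rfl (by omega)) h
        · exact absurd h (hvw k (hIv hk1 hk2) 1 (hIw le_rfl ht1) 0)
        · exact absurd h (hvw k (hIv hk1 hk2) 1 (hIw le_rfl ht1) 1)
      · by_cases et : i = t
        · rw [et, edgt] at hm
          simp only [Finset.mem_insert, Finset.mem_singleton] at hm
          rcases hm with h | h | h
          · have := hv k (hIv hk1 hk2) t (hIv (by omega) le_rfl) h; omega
          · exact absurd h (hvw k (hIv hk1 hk2) (t - 1) (hIw ht1 le_rfl) 0)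
          · exact absurd h (hvw k (hIv hk1 hk2) (t - 1) (hIw ht1 le_rfl) 1)
        · rw [edgm i e1 et] at hm
          simp only [Finset.mem_insert, Finset.mem_singleton] at hm
          rcases hm with h | h | h | h | h
          · exact hv k (hIv hk1 hk2) i (hIv hi1 hi2) h
          · exact absurd h (hvw k (hIv hk1 hk2) (i - 1) (hIw (by omega) (by omega)) 0)
          · exact absurd h (hvw k (hIv hk1 hk2) (i - 1) (hIw (by omega) (by omega)) 1)
          · exact absurd h (hvw k (hIv hk1 hk2) i (hIw (by omega) (by omega)) 0)
          · exact absurd h (hvw k (hIv hk1 hk2) i (hIw (by omega) (by omega)) 1)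
    · rintro rfl
      by_cases e1 : k = 1
      · subst e1; rw [edg1]; exact Finset.mem_insert_self _ _
      · by_cases et : k = t
        · rw [et, edgt]; exact Finset.mem_insert_self _ _
        · rw [edgm k e1 et]; exact Finset.mem_insert_self _ _
  have hw_mem : ∀ k, 1 ≤ k → k ≤ t - 1 → ∀ j : Fin 2, ∀ i, 1 ≤ i → i ≤ t →
      (w k j ∈ stmt12Edg t v w i ↔ i = k ∨ i = k + 1) := by
    intro k hk1 hk2 j i hi1 hi2
    have hkI := hIw hk1 hk2
    constructor
    · intro hm
      by_cases e1 : i = 1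
      · subst e1
        rw [edg1] at hm
        simp only [Finset.mem_insert, Finset.mem_singleton] at hm
        rcases hm with h | h | h
        · exact absurd h.symm (hvw 1 (hIv le_rfl (by omega)) k hkI j)
        · have := (hw k hkI 1 (hIw le_rfl ht1) j 0 h).1; omega
        · have := (hw k hkI 1 (hIw le_rfl ht1) j 1 h).1; omega
      · by_cases et : i = t
        · rw [et, edgt] at hm
          simp only [Finset.mem_insert, Finset.mem_singleton] at hm
          rcases hm with h | h | h
          · exact absurd h.symm (hvw t (hIv (by omega) le_rfl) k hkI j)
          · have := (hw k hkI (t - 1) (hIw ht1 le_rfl) j 0 h).1; omega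
          · have := (hw k hkI (t - 1) (hIw ht1 le_rfl) j 1 h).1; omega
        · rw [edgm i e1 et] at hm
          simp only [Finset.mem_insert, Finset.mem_singleton] at hm
          rcases hm with h | h | h | h | h
          · exact absurd h.symm (hvw i (hIv hi1 hi2) k hkI j)
          · have := (hw k hkI (i - 1) (hIw (by omega) (by omega)) j 0 h).1; omega
          · have := (hw k hkI (i - 1) (hIw (by omega) (by omega)) j 1 h).1; omega
          · have := (hw k hkI i (hIw (by omega) (by omega)) j 0 h).1; omega
          · have := (hw k hkI i (hIw (by omega) (by omega)) j 1 h).1; omega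
    · intro hik
      rcases hik with h | h
      · rw [h]
        by_cases e1 : k = 1
        · rw [e1, edg1]
          fin_cases j
          · exact Finset.mem_insert_of_mem (Finset.mem_insert_self _ _)
          · exact Finset.mem_insert_of_mem (Finset.mem_insert_of_mem
              (Finset.mem_singleton_self _))
        · have et : k ≠ t := by omega
          rw [edgm k e1 et]
          fin_cases j
          · exact Finset.mem_insert_of_mem (Finset.mem_insert_of_mem
              (Finset.mem_insert_of_mem (Finset.mem_insert_self _ _)))
          · exact Finset.mem_insert_of_mem (Finset.mem_insert_of_mem
              (Finset.mem_insert_of_mem (Finset.mem_insert_of_mem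
                (Finset.mem_singleton_self _))))
      · rw [h]
        by_cases et : k + 1 = t
        · have h' : t - 1 = k := by omega
          rw [et, edgt, h']
          fin_cases j
          · exact Finset.mem_insert_of_mem (Finset.mem_insert_self _ _)
          · exact Finset.mem_insert_of_mem (Finset.mem_insert_of_mem
              (Finset.mem_singleton_self _))
        · have e1 : k + 1 ≠ 1 := by omega
          rw [edgm (k + 1) e1 et, (by omega : k + 1 - 1 = k)]
          fin_cases j
          · exact Finset.mem_insert_of_mem (Finset.mem_insert_self _ _)
          · exact Finset.mem_insert_of_mem (Finset.mem_insert_of_mem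
              (Finset.mem_insert_self _ _))
  set S : ℕ → Set Pt := fun i => R.β (stmt12Edg t v w i) with hSdef
  have hSconv : ∀ i, 1 ≤ i → i ≤ t → Convex ℝ (S i) ∧ Collinear ℝ (S i) := by
    intro i h1 h2
    obtain ⟨A, B, -, hAB⟩ := R.β_isSegment _ (hedgE i h1 h2)
    simp only [hSdef]
    rw [hAB]
    exact ⟨convex_segment A B, stmt12_collinear_segment A B⟩
  have hvS : ∀ k, 1 ≤ k → k ≤ t → ∀ i, 1 ≤ i → i ≤ t → (R.α (v k) ∈ S i ↔ k = i) := by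
    intro k hk1 hk2 i hi1 hi2
    simp only [hSdef]
    rw [← R.incidence (v k) (hvV k hk1 hk2) _ (hedgE i hi1 hi2)]
    exact hv_mem k hk1 hk2 i hi1 hi2
  have hwS : ∀ k, 1 ≤ k → k ≤ t - 1 → ∀ j : Fin 2, ∀ i, 1 ≤ i → i ≤ t →
      (R.α (w k j) ∈ S i ↔ i = k ∨ i = k + 1) := by
    intro k hk1 hk2 j i hi1 hi2
    simp only [hSdef]
    rw [← R.incidence (w k j) (hwV k hk1 hk2 j) _ (hedgE i hi1 hi2)]
    exact hw_mem k hk1 hk2 j i hi1 hi2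
  have hwwne : ∀ k, 1 ≤ k → k ≤ t - 1 → ∀ k', 1 ≤ k' → k' ≤ t - 1 → ∀ j j' : Fin 2,
      (k ≠ k' ∨ j ≠ j') → R.α (w k j) ≠ R.α (w k' j') := by
    intro k h1 h2 k' h1' h2' j j' hne heq
    obtain ⟨e1, e2⟩ := hw k (hIw h1 h2) k' (hIw h1' h2') j j'
      (R.α_inj (hwV k h1 h2 j) (hwV k' h1' h2' j') heq)
    rcases hne with h | h
    · exact h e1
    · exact h e2
  have hvvne : ∀ k, 1 ≤ k → k ≤ t → ∀ k', 1 ≤ k' → k' ≤ t → k ≠ k' →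
      R.α (v k) ≠ R.α (v k') := by
    intro k h1 h2 k' h1' h2' hne heq
    exact hne (hv k (hIv h1 h2) k' (hIv h1' h2')
      (R.α_inj (hvV k h1 h2) (hvV k' h1' h2') heq))
  have hxy : R.α (w 1 0) ≠ R.α (w 1 1) :=
    hwwne 1 le_rfl ht1 1 le_rfl ht1 0 1 (Or.inr (by decide))
  have hxS1 : R.α (w 1 0) ∈ S 1 := (hwS 1 le_rfl ht1 0 1 le_rfl (by omega)).2 (Or.inl rfl)
  have hyS1 : R.α (w 1 1) ∈ S 1 := (hwS 1 le_rfl ht1 1 1 le_rfl (by omega)).2 (Or.inl rfl)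
  have hsubL : ∀ i, 1 ≤ i → i ≤ t →
      ∀ z ∈ S i, z ∈ (affineSpan ℝ {R.α (w 1 0), R.α (w 1 1)} : AffineSubspace ℝ Pt) := by
    intro i hi1
    induction i, hi1 using Nat.le_induction with
    | base =>
      intro _ z hz
      exact (hSconv 1 le_rfl (by omega)).2.mem_affineSpan_of_mem_of_ne hxS1 hyS1 hz hxy
    | succ i hi ih =>
      intro hit z hz
      have hi1t : i ≤ t - 1 := by omega
      have hw0i : R.α (w i 0) ∈ S i := (hwS i hi hi1t 0 i hi (by omega)).2 (Or.inl rfl)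
      have hw1i : R.α (w i 1) ∈ S i := (hwS i hi hi1t 1 i hi (by omega)).2 (Or.inl rfl)
      have hw0i' : R.α (w i 0) ∈ S (i + 1) :=
        (hwS i hi hi1t 0 (i + 1) (by omega) hit).2 (Or.inr rfl)
      have hw1i' : R.α (w i 1) ∈ S (i + 1) :=
        (hwS i hi hi1t 1 (i + 1) (by omega) hit).2 (Or.inr rfl)
      have hne : R.α (w i 0) ≠ R.α (w i 1) :=
        hwwne i hi hi1t i hi hi1t 0 1 (Or.inr (by decide))
      have hzz := (hSconv (i + 1) (by omega) hit).2.mem_affineSpan_of_mem_of_ne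
        hw0i' hw1i' hz hne
      exact affineSpan_pair_le_of_mem_of_mem (ih (by omega) _ hw0i) (ih (by omega) _ hw1i) hzz
  have hvL : ∀ k, 1 ≤ k → k ≤ t →
      R.α (v k) ∈ (affineSpan ℝ {R.α (w 1 0), R.α (w 1 1)} : AffineSubspace ℝ Pt) :=
    fun k h1 h2 => hsubL k h1 h2 _ ((hvS k h1 h2 k h1 h2).2 rfl)
  have hwL : ∀ k, 1 ≤ k → k ≤ t - 1 → ∀ j : Fin 2,
      R.α (w k j) ∈ (affineSpan ℝ {R.α (w 1 0), R.α (w 1 1)} : AffineSubspace ℝ Pt) :=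
    fun k h1 h2 j => hsubL k h1 (by omega) _ ((hwS k h1 h2 j k h1 (by omega)).2 (Or.inl rfl))
  constructor
  · refine Collinear.subset ?_ (stmt12_collinear_span (R.α (w 1 0)) (R.α (w 1 1)))
    rintro p (⟨i, h1, h2, rfl⟩ | ⟨i, h1, h2, j, rfl⟩)
    · exact hvL i h1 h2
    · exact hwL i h1 h2 j
  · intro i hi2 hit1
    have hti : 3 ≤ t := by omega
    obtain ⟨d, hd⟩ := (collinear_iff_of_mem
      (left_mem_affineSpan_pair ℝ (R.α (w 1 0)) (R.α (w 1 1)))).1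
      (stmt12_collinear_span (R.α (w 1 0)) (R.α (w 1 1)))
    have hd0 : d ≠ 0 := by
      rintro rfl
      obtain ⟨r, hr⟩ := hd (R.α (w 1 1)) (right_mem_affineSpan_pair ℝ _ _)
      simp at hr
      exact hxy hr.symm
    set f : ℝ →ᵃ[ℝ] Pt := AffineMap.lineMap (R.α (w 1 0)) (d +ᵥ R.α (w 1 0)) with hfdef
    have hfr : ∀ r : ℝ, f r = r • d +ᵥ R.α (w 1 0) := by
      intro r
      simp [hfdef, AffineMap.lineMap_apply, vadd_vsub]
    have hxne : R.α (w 1 0) ≠ d +ᵥ R.α (w 1 0) := by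
      intro h
      apply hd0
      have h2 := vadd_vsub d (R.α (w 1 0))
      rw [← h, vsub_self] at h2
      exact h2.symm
    have hinj : Function.Injective f := AffineMap.lineMap_injective ℝ hxne
    obtain ⟨ra, hra⟩ := hd _ (hvL (i - 1) (by omega) (by omega))
    obtain ⟨rb, hrb⟩ := hd _ (hvL i (by omega) (by omega))
    obtain ⟨rc, hrc⟩ := hd _ (hvL (i + 1) (by omega) (by omega))
    obtain ⟨rq, hrq⟩ := hd _ (hwL (i - 1) (by omega) (by omega) 0)
    obtain ⟨rp, hrp⟩ := hd _ (hwL i (by omega) (by omega) 0)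
    rw [← hfr ra] at hra
    rw [← hfr rb] at hrb
    rw [← hfr rc] at hrc
    rw [← hfr rq] at hrq
    rw [← hfr rp] at hrp
    have htrans : ∀ (T : Set Pt), Convex ℝ T → ∀ r s u : ℝ,
        f r ∈ T → f s ∈ T → f u ∉ T → u ∉ Set.uIcc r s := by
      intro T hT r s u h1 h2 h3 hm
      apply h3
      apply hT.segment_subset h1 h2
      have hwb : Wbtw ℝ r u s := mem_segment_iff_wbtw.1 (by rw [segment_eq_uIcc]; exact hm)
      exact mem_segment_iff_wbtw.2 (hwb.map f)
    have ma : R.α (v (i - 1)) ∈ S (i - 1) :=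
      (hvS (i - 1) (by omega) (by omega) (i - 1) (by omega) (by omega)).2 rfl
    have na : R.α (v (i - 1)) ∉ S i := fun h => by
      have := (hvS (i - 1) (by omega) (by omega) i (by omega) (by omega)).1 h; omega
    have mb : R.α (v i) ∈ S i := (hvS i (by omega) (by omega) i (by omega) (by omega)).2 rfl
    have nbm : R.α (v i) ∉ S (i - 1) := fun h => by
      have := (hvS i (by omega) (by omega) (i - 1) (by omega) (by omega)).1 h; omega
    have nbp : R.α (v i) ∉ S (i + 1) := fun h => by
      have := (hvS i (by omega) (by omega) (i + 1) (by omega) (by omega)).1 h; omega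
    have mc : R.α (v (i + 1)) ∈ S (i + 1) :=
      (hvS (i + 1) (by omega) (by omega) (i + 1) (by omega) (by omega)).2 rfl
    have nc : R.α (v (i + 1)) ∉ S i := fun h => by
      have := (hvS (i + 1) (by omega) (by omega) i (by omega) (by omega)).1 h; omega
    have mq1 : R.α (w (i - 1) 0) ∈ S (i - 1) :=
      (hwS (i - 1) (by omega) (by omega) 0 (i - 1) (by omega) (by omega)).2 (Or.inl rfl)
    have mq2 : R.α (w (i - 1) 0) ∈ S i :=
      (hwS (i - 1) (by omega) (by omega) 0 i (by omega) (by omega)).2 (Or.inr (by omega))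
    have nq : R.α (w (i - 1) 0) ∉ S (i + 1) := fun h => by
      have := (hwS (i - 1) (by omega) (by omega) 0 (i + 1) (by omega) (by omega)).1 h; omega
    have mp1 : R.α (w i 0) ∈ S i :=
      (hwS i (by omega) (by omega) 0 i (by omega) (by omega)).2 (Or.inl rfl)
    have mp2 : R.α (w i 0) ∈ S (i + 1) :=
      (hwS i (by omega) (by omega) 0 (i + 1) (by omega) (by omega)).2 (Or.inr rfl)
    have np : R.α (w i 0) ∉ S (i - 1) := fun h => by
      have := (hwS i (by omega) (by omega) 0 (i - 1) (by omega) (by omega)).1 h; omega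
    have cm := (hSconv (i - 1) (by omega) (by omega)).1
    have ci := (hSconv i (by omega) (by omega)).1
    have cp := (hSconv (i + 1) (by omega) (by omega)).1
    have A := htrans (S (i - 1)) cm rq ra rb (hrq ▸ mq1) (hra ▸ ma) (hrb ▸ nbm)
    have C := htrans (S i) ci rq rb ra (hrq ▸ mq2) (hrb ▸ mb) (hra ▸ na)
    have E := htrans (S i) ci rq rb rc (hrq ▸ mq2) (hrb ▸ mb) (hrc ▸ nc)
    have F := htrans (S i) ci rp rb rc (hrp ▸ mp1) (hrb ▸ mb) (hrc ▸ nc)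
    have G := htrans (S (i + 1)) cp rp rc rb (hrp ▸ mp2) (hrc ▸ mc) (hrb ▸ nbp)
    have D := htrans (S i) ci rp rb ra (hrp ▸ mp1) (hrb ▸ mb) (hra ▸ na)
    have Hh := htrans (S (i + 1)) cp rp rc rq (hrp ▸ mp2) (hrc ▸ mc) (hrq ▸ nq)
    have B := htrans (S (i - 1)) cm rq ra rp (hrq ▸ mq1) (hra ▸ ma) (hrp ▸ np)
    have hab : ra ≠ rb := fun h =>
      hvvne (i - 1) (by omega) (by omega) i (by omega) (by omega) (by omega)
        (by rw [hra, hrb, h])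
    have hbc : rb ≠ rc := fun h =>
      hvvne i (by omega) (by omega) (i + 1) (by omega) (by omega) (by omega)
        (by rw [hrb, hrc, h])
    have hac : ra ≠ rc := fun h =>
      hvvne (i - 1) (by omega) (by omega) (i + 1) (by omega) (by omega) (by omega)
        (by rw [hra, hrc, h])
    have hsb := stmt12_keylem ra rb rc rq rp hab hbc hac A C E F G D Hh B
    have hsb2 : Sbtw ℝ (f ra) (f rb) (f rc) := (Function.Injective.sbtw_map_iff hinj).2 hsb
    rw [← hra, ← hrb, ← hrc] at hsb2
    rw [openSegment_eq_image_lineMap]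
    exact hsb2.mem_image_Ioo
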